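/- Define G_n(t) = (1/ω_n) e^{−g_n t} sinh(ω_n t) for n with g_n² > b_n, ω_n = √(g_n² − b_n). Then for all t ≥ 0, 0 ≤ G_n(t) ≤ (1/ω_n) e^{−(g_n − ω_n) t} ≤ (1/ω_n) e^{−p_λ t}, where p_λ = π²/(επ² + a_λ l²) and a_λ = α + ελ²/4. -/
import Mathlib
set_option maxHeartbeats 1000000


open Real

theorem Gn_bound (l lam alpha eps : ℝ) (hl : 0 < l) (hlam : 0 < lam)
    (halpha : 0 < alpha) (heps : 0 < eps) (n : ℕ) (hn : 0 < n)
    (γ b g ω a p : ℝ)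
    (hγ : γ = n * π / l) (hb : b = γ ^ 2 + lam ^ 2 / 4)
    (hg : g = (alpha + eps * b) / 2) (hlt : b < g ^ 2)
    (hω : ω = Real.sqrt (g ^ 2 - b))
    (ha : a = alpha + eps * lam ^ 2 / 4)
    (hp : p = π ^ 2 / (eps * π ^ 2 + a * l ^ 2))
    (G : ℝ → ℝ)
    (hG : ∀ t, G t = (1 / ω) * Real.exp (-g * t) * Real.sinh (ω * t)) :
    ∀ t : ℝ, 0 ≤ t →
      0 ≤ G t ∧ G t ≤ (1 / ω) * Real.exp (-(g - ω) * t) ∧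
      (1 / ω) * Real.exp (-(g - ω) * t) ≤ (1 / ω) * Real.exp (-p * t) := by
  have hπ : 0 < π := Real.pi_pos
  have hn1 : (1 : ℝ) ≤ (n : ℝ) := by exact_mod_cast hn
  have hγpos : 0 < γ := by
    rw [hγ]; positivity
  have hbpos : 0 < b := by rw [hb]; positivity
  have hgpos : 0 < g := by rw [hg]; positivity
  have hω2 : ω ^ 2 = g ^ 2 - b := by
    rw [hω, sq_sqrt (by linarith)]
  have hωpos : 0 < ω := by
    rw [hω]; exact Real.sqrt_pos.2 (by linarith)
  have hωlt : ω < g := by nlinarith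
  have hapos : 0 < a := by rw [ha]; positivity
  have hD : 0 < eps * π ^ 2 + a * l ^ 2 := by positivity
  have hppos : 0 < p := by rw [hp]; positivity
  have hp' : p * (eps * π ^ 2 + a * l ^ 2) = π ^ 2 := by
    rw [hp]; field_simp
  have hbge : π ^ 2 / l ^ 2 ≤ b := by
    have h2 : π ^ 2 / l ^ 2 ≤ γ ^ 2 := by
      rw [hγ, div_pow, mul_pow]
      apply div_le_div_of_nonneg_right _ (by positivity)
      have h1 : (1:ℝ) ≤ (n:ℝ) ^ 2 := by nlinarith
      nlinarith [sq_nonneg π]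
    nlinarith [sq_nonneg lam]
  have hbD : π ^ 2 * alpha ≤ b * (a * l ^ 2) := by
    have h3 : π ^ 2 ≤ b * l ^ 2 := by
      rw [div_le_iff₀ (by positivity)] at hbge; linarith
    nlinarith [mul_le_mul_of_nonneg_right h3 halpha.le, sq_nonneg lam,
      mul_pos hbpos (mul_pos heps (mul_pos (mul_pos hlam hlam) (mul_pos hl hl)))]
  have hkey : p ≤ g - ω := by
    have h4 : p * (alpha + eps * b) ≤ b := by
      rw [hp, div_mul_eq_mul_div, div_le_iff₀ hD]
      calc π ^ 2 * (alpha + eps * b) = π ^ 2 * alpha + b * (eps * π ^ 2) := by ring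
        _ ≤ b * (a * l ^ 2) + b * (eps * π ^ 2) := by linarith [hbD]
        _ = b * (eps * π ^ 2 + a * l ^ 2) := by ring
    have h2g : alpha + eps * b = 2 * g := by rw [hg]; ring
    have h5 : p * (g + ω) ≤ b := by
      nlinarith [h4, mul_le_mul_of_nonneg_left hωlt.le hppos.le, h2g]
    have h6 : (g - ω) * (g + ω) = b := by nlinarith
    have hgw : 0 < g + ω := by linarith
    exact le_of_mul_le_mul_right (by linarith) hgw
  intro t ht
  have hωt : 0 ≤ ω * t := by positivity
  refine ⟨?_, ?_, ?_⟩
  · rw [hG]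
    have h0 : Real.sinh 0 ≤ Real.sinh (ω * t) := Real.sinh_le_sinh.2 hωt
    rw [Real.sinh_zero] at h0
    positivity
  · rw [hG]
    have hs : Real.sinh (ω * t) ≤ Real.exp (ω * t) := by
      rw [Real.sinh_eq]
      have := Real.exp_pos (-(ω * t))
      have := Real.exp_pos (ω * t)
      linarith
    have hmul : Real.exp (-g * t) * Real.sinh (ω * t) ≤
        Real.exp (-g * t) * Real.exp (ω * t) :=
      mul_le_mul_of_nonneg_left hs (Real.exp_pos _).le
    have he : Real.exp (-g * t) * Real.exp (ω * t) = Real.exp (-(g - ω) * t) := by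
      rw [← Real.exp_add]; ring_nf
    calc (1 / ω) * Real.exp (-g * t) * Real.sinh (ω * t)
        = (1 / ω) * (Real.exp (-g * t) * Real.sinh (ω * t)) := by ring
      _ ≤ (1 / ω) * (Real.exp (-g * t) * Real.exp (ω * t)) := by
          apply mul_le_mul_of_nonneg_left hmul (by positivity)
      _ = (1 / ω) * Real.exp (-(g - ω) * t) := by rw [he]
  · apply mul_le_mul_of_nonneg_left _ (by positivity)
    apply Real.exp_le_exp.2
    have := mul_le_mul_of_nonneg_right hkey ht
    nlinarith
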